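/- The function R(t, k) defined by R(1, k) = 2k for k ≥ 0, R(t, 0) = 3 for t > 1, and R(t, k) = R(t, k−1) · R(t−1, R(t, k−1)) for k > 0 and t > 1, satisfies R(t+1, j) > A(t, j) for all t, j ≥ 1, where A is the Ackermann-style function defined by A(1, j) = 2^j, A(i, 0) = 2 for i > 1, and A(i, j) = A(i−1, A(i, j−1)) for i > 1, j > 0. -/

import Mathlib

/-- The Ackermann-style function `A` with `A(1, j) = 2^j`, `A(i, 0) = 2` for
`i > 1`, and `A(i, j) = A(i−1, A(i, j−1))` for `i > 1, j > 0`. -/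
def Afun : ℕ → ℕ → ℕ
  | 0, _ => 0
  | 1, j => 2 ^ j
  | (_ + 2), 0 => 2
  | (i + 2), (j + 1) => Afun (i + 1) (Afun (i + 2) j)
termination_by i j => (i, j)

/-- The function `R` with `R(1, k) = 2k`, `R(t, 0) = 3` for `t > 1`, and
`R(t, k) = R(t, k−1) · R(t−1, R(t, k−1))` for `t > 1, k > 0`. -/
def Rfun : ℕ → ℕ → ℕ
  | 0, _ => 0
  | 1, k => 2 * k
  | (_ + 2), 0 => 3
  | (t + 2), (k + 1) => Rfun (t + 2) k * Rfun (t + 1) (Rfun (t + 2) k)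
termination_by t k => (t, k)

lemma Afun_ge : ∀ i j, j + 1 ≤ Afun (i + 1) j := by
  intro i
  induction i with
  | zero =>
    intro j
    simpa [Afun] using (Nat.lt_two_pow_self (n := j))
  | succ i ih =>
    intro j
    show j + 1 ≤ Afun (i + 2) j
    induction j with
    | zero => simp [Afun]
    | succ j ihj =>
      have h1 : Afun (i + 2) j + 1 ≤ Afun (i + 1) (Afun (i + 2) j) := ih _
      have : Afun (i + 2) (j + 1) = Afun (i + 1) (Afun (i + 2) j) := by
        simp [Afun]
      omega

lemma Afun_mono (i : ℕ) : Monotone (Afun (i + 1)) := by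
  apply monotone_nat_of_le_succ
  intro j
  cases i with
  | zero => simpa [Afun] using Nat.pow_le_pow_right (by norm_num) (Nat.le_succ j)
  | succ i =>
    show Afun (i + 2) j ≤ Afun (i + 2) (j + 1)
    have h1 : Afun (i + 2) j + 1 ≤ Afun (i + 1) (Afun (i + 2) j) := Afun_ge _ _
    have : Afun (i + 2) (j + 1) = Afun (i + 1) (Afun (i + 2) j) := by simp [Afun]
    omega

lemma Rfun_ge3 : ∀ t k, 3 ≤ Rfun (t + 2) k := by
  intro t
  induction t using Nat.strong_induction_on with
  | _ t ih =>
    intro k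
    induction k with
    | zero => simp [Rfun]
    | succ k ihk =>
      have hm : 1 ≤ Rfun (t + 1) (Rfun (t + 2) k) := by
        cases t with
        | zero =>
          show 1 ≤ Rfun 1 (Rfun 2 k)
          have hk2 : 3 ≤ Rfun 2 k := ihk
          have : Rfun 1 (Rfun 2 k) = 2 * Rfun 2 k := by simp [Rfun]
          omega
        | succ s =>
          show 1 ≤ Rfun (s + 2) (Rfun (s + 3) k)
          have := ih s (by omega) (Rfun (s + 3) k)
          omega
      have : Rfun (t + 2) (k + 1) = Rfun (t + 2) k * Rfun (t + 1) (Rfun (t + 2) k) := by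
        simp [Rfun]
      nlinarith

lemma base_case : ∀ j, Afun 1 j < Rfun 2 j := by
  intro j
  induction j with
  | zero => simp [Afun, Rfun]
  | succ j ih =>
    have hA : Afun 1 (j + 1) = 2 * 2 ^ j := by simp [Afun]; ring
    have hA' : Afun 1 j = 2 ^ j := by simp [Afun]
    have hR1 : Rfun 2 (j + 1) = Rfun 2 j * Rfun 1 (Rfun 2 j) := by simp [Rfun]
    have hR2 : Rfun 1 (Rfun 2 j) = 2 * Rfun 2 j := by simp [Rfun]
    have hR : Rfun 2 (j + 1) = Rfun 2 j * (2 * Rfun 2 j) := by rw [hR1, hR2]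
    have h3 : 3 ≤ Rfun 2 j := Rfun_ge3 0 j
    rw [hA, hR]
    rw [hA'] at ih
    nlinarith

lemma aux_case : ∀ t j, Afun (t + 2) j < Rfun (t + 3) j := by
  intro t
  induction t using Nat.strong_induction_on with
  | _ t ih =>
    intro j
    induction j with
    | zero =>
      have h0 : Afun (t + 2) 0 = 2 := by simp [Afun]
      have h1 : Rfun (t + 3) 0 = 3 := by simp [Rfun]
      omega
    | succ j ihj =>
      set m := Rfun (t + 3) j with hm
      have hm3 : 3 ≤ m := Rfun_ge3 (t + 1) j
      have hAm : Afun (t + 2) j ≤ m := le_of_lt ihj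
      have hA : Afun (t + 2) (j + 1) = Afun (t + 1) (Afun (t + 2) j) := by simp [Afun]
      have hmono : Afun (t + 1) (Afun (t + 2) j) ≤ Afun (t + 1) m := Afun_mono t hAm
      have hkey : Afun (t + 1) m < Rfun (t + 2) m := by
        cases t with
        | zero => exact base_case m
        | succ s => exact ih s (by omega) m
      have hR : Rfun (t + 3) (j + 1) = m * Rfun (t + 2) m := by
        simp [Rfun, hm]
      have : Rfun (t + 2) m ≤ m * Rfun (t + 2) m := Nat.le_mul_of_pos_left _ (by omega)
      omega

/-- `R(t+1, j) > A(t, j)` for all `t, j ≥ 1`. -/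
theorem Rfun_succ_gt_Afun (t j : ℕ) (ht : 1 ≤ t) (hj : 1 ≤ j) :
    Afun t j < Rfun (t + 1) j := by
  match t, ht with
  | 1, _ => exact base_case j
  | (s + 2), _ => exact aux_case s j
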